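/- In a regular return m = τ₁…τ₂ₙ for a state P of a medium, every cyclic rotation τᵢ…τ₂ₙτ₁…τᵢ₋₁ is an orderly return for the state Pτ₁⋯τᵢ₋₁, and consequently the opposite tokens τᵢ and τᵢ₊ₙ are mutual reverses. -/

import Mathlib

variable {S : Type*}

/-- Result of applying message `m` (a list of tokens) to state `P`. -/
def mApply (m : List (S → S)) (P : S) : S := m.foldl (fun s τ => τ s) P

/-- `τ'` is a reverse of `τ`. -/
def IsReverse (τ τ' : S → S) : Prop := ∀ P Q : S, P ≠ Q → (τ P = Q ↔ τ' Q = P)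

/-- `(S, T)` is a token system. -/
def IsTokenSystem (T : Set (S → S)) : Prop :=
  Nontrivial S ∧ T.Nonempty ∧ ∀ τ ∈ T, τ ≠ id

/-- `m` is a message of the token system with token set `T`. -/
def IsMsg (T : Set (S → S)) (m : List (S → S)) : Prop := ∀ τ ∈ m, τ ∈ T

/-- `m` is stepwise effective for `P`. -/
def StepwiseEff : List (S → S) → S → Prop
  | [], _ => True
  | τ :: rest, P => τ P ≠ P ∧ StepwiseEff rest (τ P)

/-- `m` is consistent: it contains no token together with a reverse of it. -/
def Consistent (m : List (S → S)) : Prop :=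
  ∀ τ ∈ m, ∀ τ' ∈ m, ¬ IsReverse τ τ'

/-- `m` is concise for `P`. -/
def Concise (T : Set (S → S)) (m : List (S → S)) (P : S) : Prop :=
  IsMsg T m ∧ Consistent m ∧ StepwiseEff m P ∧ m.Nodup

/-- `m` is a return message for `P`. -/
def IsReturn (m : List (S → S)) (P : S) : Prop :=
  StepwiseEff m P ∧ mApply m P = P

/-- `m` is vacuous: its indices partition into pairs of mutually reverse tokens. -/
def Vacuous (m : List (S → S)) : Prop :=
  ∃ σ : Equiv.Perm (Fin m.length),
    (∀ i, σ i ≠ i) ∧ (∀ i, σ (σ i) = i) ∧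
    ∀ i, IsReverse (m.get i) (m.get (σ i))

/-- `(S, T)` is a medium: token system satisfying [Ma] and [Mb]. -/
def IsMedium (T : Set (S → S)) : Prop :=
  IsTokenSystem T ∧
  (∀ P Q : S, P ≠ Q → ∃ m, Concise T m P ∧ mApply m P = Q) ∧
  (∀ (m : List (S → S)) (P : S), IsMsg T m → IsReturn m P → Vacuous m)

/-- Content of a message: its set of tokens. -/
def msgContent (m : List (S → S)) : Set (S → S) := {τ | τ ∈ m}

/-- Token content of a state `P`. -/
def SContent (T : Set (S → S)) (P : S) : Set (S → S) :=
  {τ | ∃ (V : S) (m : List (S → S)), Concise T m V ∧ mApply m V = P ∧ τ ∈ m}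

/-- `mr` is the reverse message `τ̃ₙ…τ̃₁` of `m = τ₁…τₙ`. -/
def IsReverseOfMsg (m mr : List (S → S)) : Prop :=
  List.Forall₂ (fun τ τ' => IsReverse τ τ' ∧ IsReverse τ' τ) m mr.reverse

/-- An orderly return for `P`: a message `q · ñ` where `q`, `nn` are concise
messages producing the same state `V ≠ P` from `P`, and `ñ` reverses `nn`. -/
def OrderlyReturn (T : Set (S → S)) (m : List (S → S)) (P : S) : Prop :=
  ∃ q nn nr : List (S → S), Concise T q P ∧ Concise T nn P ∧
    mApply q P = mApply nn P ∧ mApply q P ≠ P ∧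
    IsReverseOfMsg nn nr ∧ m = q ++ nr

namespace Stmt11Aux

lemma mApply_append (a b : List (S → S)) (P : S) :
    mApply (a ++ b) P = mApply b (mApply a P) := List.foldl_append

lemma mApply_cons (τ : S → S) (l : List (S → S)) (P : S) :
    mApply (τ :: l) P = mApply l (τ P) := rfl

lemma stepwise_append {a b : List (S → S)} {P : S} :
    StepwiseEff (a ++ b) P ↔ StepwiseEff a P ∧ StepwiseEff b (mApply a P) := by
  induction a generalizing P with
  | nil => simp [StepwiseEff, mApply]
  | cons τ l ih =>
    simp only [List.cons_append, StepwiseEff, List.append_eq, ih, mApply_cons, and_assoc]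

lemma reverse_unique {τ τ₁ τ₂ : S → S} (h1 : IsReverse τ τ₁) (h2 : IsReverse τ τ₂) :
    τ₁ = τ₂ := by
  funext Q
  by_cases hq : τ₁ Q = Q
  · rw [hq]
    by_contra hne
    have hne' : τ₂ Q ≠ Q := fun h => hne h.symm
    have h2' : τ (τ₂ Q) = Q := (h2 (τ₂ Q) Q hne').mpr rfl
    have h1' : τ₁ Q = τ₂ Q := (h1 (τ₂ Q) Q hne').mp h2'
    exact hne' (by rw [← h1', hq])
  · have h1' : τ (τ₁ Q) = Q := (h1 (τ₁ Q) Q hq).mpr rfl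
    exact ((h2 (τ₁ Q) Q hq).mp h1').symm

open Classical in
noncomputable def rev (τ : S → S) : S → S :=
  if h : ∃ τ', IsReverse τ τ' then h.choose else id

lemma rev_spec {τ τ' : S → S} (h : IsReverse τ τ') : rev τ = τ' := by
  have he : ∃ t, IsReverse τ t := ⟨τ', h⟩
  simp only [rev]
  rw [dif_pos he]
  exact reverse_unique he.choose_spec h

variable {T : Set (S → S)}

/-- Every token of a medium has a mutual reverse in `T`, and it is `rev τ`. -/
lemma exists_reverse (hM : IsMedium T) {τ : S → S} (hτ : τ ∈ T) :
    rev τ ∈ T ∧ IsReverse τ (rev τ) ∧ IsReverse (rev τ) τ := by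
  obtain ⟨⟨hnt, hne, hid⟩, hMa, hMb⟩ := hM
  have hτid : τ ≠ id := hid τ hτ
  obtain ⟨P, hP⟩ := Function.ne_iff.mp hτid
  have hP' : τ P ≠ P := hP
  obtain ⟨w, hw, hwP⟩ := hMa (τ P) P hP'
  set m0 : List (S → S) := τ :: w with hm0
  have hmsg : IsMsg T m0 := by
    intro x hx
    rcases List.mem_cons.mp hx with h | h
    · exact h ▸ hτ
    · exact hw.1 x h
  have hret : IsReturn m0 P := by
    refine ⟨⟨hP', hw.2.2.1⟩, ?_⟩
    rw [hm0, mApply_cons, hwP]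
  obtain ⟨σ, hσ1, hσ2, hσ3⟩ := hMb m0 P hmsg hret
  have h0 : (0 : ℕ) < m0.length := by simp [hm0]
  set i0 : Fin m0.length := ⟨0, h0⟩ with hi0
  have hk0 : σ i0 ≠ i0 := hσ1 i0
  obtain ⟨j, hj⟩ : ∃ j, (σ i0 : ℕ) = j + 1 := by
    refine ⟨(σ i0 : ℕ) - 1, ?_⟩
    have : (σ i0 : ℕ) ≠ 0 := fun h => hk0 (Fin.ext h)
    omega
  have hjlt : j < w.length := by
    have := (σ i0).isLt
    simp only [hm0, List.length_cons] at this
    omega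
  have hgetk : m0.get (σ i0) = w[j] := by
    simp only [List.get_eq_getElem, hm0]
    simp only [hj, List.getElem_cons_succ]
  have hxT : m0.get (σ i0) ∈ T := hw.1 _ (hgetk ▸ List.getElem_mem hjlt)
  have hrev1 : IsReverse τ (m0.get (σ i0)) := hσ3 i0
  have hrev2 : IsReverse (m0.get (σ i0)) τ := by
    have := hσ3 (σ i0)
    rwa [hσ2 i0] at this
  have hrveq : rev τ = m0.get (σ i0) := rev_spec hrev1
  rw [hrveq]
  exact ⟨hxT, hrev1, hrev2⟩

/-- The reverse message of `w`. -/
noncomputable def revMsg (w : List (S → S)) : List (S → S) := (w.map rev).reverse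

lemma revMsg_length (w : List (S → S)) : (revMsg w).length = w.length := by
  simp [revMsg]

lemma isReverseOfMsg_revMsg (hM : IsMedium T) {w : List (S → S)} (hw : IsMsg T w) :
    IsReverseOfMsg w (revMsg w) := by
  unfold IsReverseOfMsg revMsg
  rw [List.reverse_reverse, List.forall₂_map_right_iff]
  rw [List.forall₂_same]
  intro x hx
  exact ⟨(exists_reverse hM (hw x hx)).2.1, (exists_reverse hM (hw x hx)).2.2⟩

lemma isReverseOfMsg_revMsg' (hM : IsMedium T) {w : List (S → S)} (hw : IsMsg T w) :
    IsReverseOfMsg (revMsg w) w := by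
  unfold IsReverseOfMsg revMsg
  rw [← List.map_reverse, List.forall₂_map_left_iff]
  rw [List.forall₂_same]
  intro x hx
  have hx' : x ∈ w := List.mem_reverse.mp hx
  exact ⟨(exists_reverse hM (hw x hx')).2.2, (exists_reverse hM (hw x hx')).2.1⟩

lemma rev_rev (hM : IsMedium T) {τ : S → S} (hτ : τ ∈ T) : rev (rev τ) = τ :=
  rev_spec (exists_reverse hM hτ).2.2

lemma revMsg_revMsg (hM : IsMedium T) {w : List (S → S)} (hw : IsMsg T w) :
    revMsg (revMsg w) = w := by
  unfold revMsg
  rw [← List.map_reverse, List.reverse_reverse, List.map_map]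
  conv_rhs => rw [← List.map_id w]
  apply List.map_congr_left
  intro x hx
  exact rev_rev hM (hw x hx)

/-- Running the reverse message undoes `w`. -/
lemma revMsg_run (hM : IsMedium T) {w : List (S → S)} (hw : IsMsg T w) {A : S}
    (hse : StepwiseEff w A) :
    StepwiseEff (revMsg w) (mApply w A) ∧ mApply (revMsg w) (mApply w A) = A := by
  induction w generalizing A with
  | nil => simp [revMsg, StepwiseEff, mApply]
  | cons τ l ih =>
    have hτT : τ ∈ T := hw τ List.mem_cons_self
    have hlmsg : IsMsg T l := fun x hx => hw x (List.mem_cons_of_mem _ hx)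
    obtain ⟨hne, hsel⟩ := hse
    have hrm : revMsg (τ :: l) = revMsg l ++ [rev τ] := by
      simp [revMsg]
    obtain ⟨ih1, ih2⟩ := ih hlmsg hsel
    have happ : mApply (τ :: l) A = mApply l (τ A) := rfl
    have hrevτ := exists_reverse hM hτT
    have hrA : rev τ (τ A) = A := (hrevτ.2.1 A (τ A) (Ne.symm hne)).mp rfl
    rw [happ, hrm]
    constructor
    · rw [stepwise_append]
      refine ⟨ih1, ?_⟩
      rw [ih2]
      exact ⟨by rw [hrA]; exact Ne.symm hne, trivial⟩
    · rw [mApply_append, ih2]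
      simpa [mApply] using hrA

/-- The reverse message of a concise message is concise (Lemma C). -/
lemma revMsg_concise (hM : IsMedium T) {w : List (S → S)} {A : S}
    (hw : Concise T w A) :
    Concise T (revMsg w) (mApply w A) ∧ mApply (revMsg w) (mApply w A) = A := by
  obtain ⟨hmsg, hcons, hse, hnd⟩ := hw
  obtain ⟨hse', happ'⟩ := revMsg_run hM hmsg hse
  have hmem : ∀ x ∈ revMsg w, ∃ y ∈ w, x = rev y := by
    intro x hx
    simp only [revMsg, List.mem_reverse, List.mem_map] at hx
    obtain ⟨y, hy, hxy⟩ := hx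
    exact ⟨y, hy, hxy.symm⟩
  refine ⟨⟨?_, ?_, hse', ?_⟩, happ'⟩
  · intro x hx
    obtain ⟨y, hy, hxy⟩ := hmem x hx
    rw [hxy]
    exact (exists_reverse hM (hmsg y hy)).1
  · intro x hx x' hx' hrevxx'
    obtain ⟨y, hy, hxy⟩ := hmem x hx
    obtain ⟨y', hy', hxy'⟩ := hmem x' hx'
    -- x = rev y, x' = rev y', IsReverse x x' ⇒ y' reverse-related to y: contradiction
    have h1 : IsReverse (rev y) y := (exists_reverse hM (hmsg y hy)).2.2
    have h2 : y = x' := by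
      have := reverse_unique h1 (hxy ▸ hrevxx' : IsReverse (rev y) x')
      exact this
    have h3 : IsReverse y' (rev y') := (exists_reverse hM (hmsg y' hy')).2.1
    have h4 : IsReverse y' y := by rw [h2, hxy']; exact h3
    exact hcons y' hy' y hy h4
  · rw [revMsg, List.nodup_reverse]
    refine List.Nodup.map_on ?_ hnd
    intro x hx y hy hxy
    have := congrArg rev hxy
    rwa [rev_rev hM (hmsg x hx), rev_rev hM (hmsg y hy)] at this

/-- A nonempty concise message cannot return to its start. -/
lemma concise_no_return (hM : IsMedium T) {w : List (S → S)} {A : S}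
    (hw : Concise T w A) (hne : w ≠ []) : mApply w A ≠ A := by
  intro heq
  obtain ⟨σ, hσ1, hσ2, hσ3⟩ := hM.2.2 w A hw.1 ⟨hw.2.2.1, heq⟩
  have h0 : 0 < w.length := List.length_pos_iff.mpr hne
  have := hσ3 ⟨0, h0⟩
  exact hw.2.1 _ (List.get_mem _ _) _ (List.get_mem _ _) this

end Stmt11Aux

open Stmt11Aux in
/-- In a regular return, every cyclic rotation is an orderly return for the
corresponding intermediate state, and opposite tokens are mutual reverses. -/
theorem stmt11 {T : Set (S → S)} (hM : IsMedium T) (P : S)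
    (m : List (S → S)) (n : ℕ) (hlen : m.length = 2 * n)
    (hor : OrderlyReturn T m P)
    (hreg : ∀ i < n, Concise T ((m.drop i).take n) (mApply (m.take i) P)) :
    (∀ i < 2 * n, OrderlyReturn T (m.drop i ++ m.take i) (mApply (m.take i) P)) ∧
    (∀ i (hi : i < n),
      IsReverse (m.get ⟨i, by omega⟩) (m.get ⟨i + n, by omega⟩) ∧
      IsReverse (m.get ⟨i + n, by omega⟩) (m.get ⟨i, by omega⟩)) := by
  classical
  rcases Nat.eq_zero_or_pos n with hn0 | hn
  · subst hn0
    exact ⟨fun i hi => absurd hi (by omega), fun i hi => absurd hi (by omega)⟩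
  obtain ⟨q, nn, nr, hq, hnn, hqnn, hVne, hrevm, hmqr⟩ := hor
  -- `nr` is determined: it is `revMsg nn`
  have hnnrev : nr.reverse = nn.map rev := by
    obtain ⟨hl, hptw⟩ := List.forall₂_iff_get.mp hrevm
    refine (List.ext_get (by simp [← hl]) ?_).symm
    intro i h1 h2
    simp only [List.get_eq_getElem, List.getElem_map]
    have := rev_spec (hptw i (by simpa using h1) h2).1
    simpa only [List.get_eq_getElem] using this
  have hnr : nr = revMsg nn := by
    rw [revMsg, ← hnnrev, List.reverse_reverse]
  -- `m` is a return message for `P`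
  have hCnr := revMsg_concise hM hnn
  have hmsgm : IsMsg T m := by
    rw [hmqr, hnr]
    intro x hx
    rcases List.mem_append.mp hx with h | h
    · exact hq.1 x h
    · exact (hCnr.1).1 x h
  have hsem : StepwiseEff m P := by
    rw [hmqr, stepwise_append, hnr]
    exact ⟨hq.2.2.1, by rw [hqnn]; exact (hCnr.1).2.2.1⟩
  have happm : mApply m P = P := by
    rw [hmqr, mApply_append, hqnn, hnr, hCnr.2]
  obtain ⟨σ, hσ1, hσ2, hσ3⟩ := hM.2.2 m P hmsgm ⟨hsem, happm⟩
  -- no two tokens within a common concise window are reverses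
  have hNoRev : ∀ j k, j < k → k - j < n → k + 1 < m.length →
      ∀ (h1 : j < m.length) (h2 : k < m.length),
      ¬ IsReverse m[j] m[k] ∧ ¬ IsReverse m[k] m[j] := by
    intro j k hjk hd hk h1 h2
    set w := k + 1 - n with hw
    have hwn : w < n := by omega
    have hwj : w ≤ j := by omega
    have hcw := (hreg w hwn).2.1
    have hwl : ∀ t, t < n → w + t < m.length → t < ((m.drop w).take n).length := by
      intro t ht hwt
      simp only [List.length_take, List.length_drop]
      omega
    have hmemj : m[j] ∈ (m.drop w).take n := by
      have hb := hwl (j - w) (by omega) (by omega)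
      have : ((m.drop w).take n)[j - w] = m[j] := by
        rw [List.getElem_take, List.getElem_drop]
        congr 1
        omega
      exact this ▸ List.getElem_mem hb
    have hmemk : m[k] ∈ (m.drop w).take n := by
      have hb := hwl (k - w) (by omega) (by omega)
      have : ((m.drop w).take n)[k - w] = m[k] := by
        rw [List.getElem_take, List.getElem_drop]
        congr 1
        omega
      exact this ▸ List.getElem_mem hb
    exact ⟨hcw _ hmemj _ hmemk, hcw _ hmemk _ hmemj⟩
  -- the permutation moves every low index up by at least n
  have hσlow : ∀ (j : ℕ) (h : j < m.length), j < n → j + n ≤ (σ ⟨j, h⟩ : ℕ) := by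
    intro j h hj
    have hkm : ((σ ⟨j, h⟩ : Fin m.length) : ℕ) < m.length := (σ ⟨j, h⟩).isLt
    have hkj : ((σ ⟨j, h⟩ : Fin m.length) : ℕ) ≠ j := by
      intro he
      exact hσ1 ⟨j, h⟩ (Fin.ext he)
    have hrevjk : IsReverse m[j] m[((σ ⟨j, h⟩ : Fin m.length) : ℕ)] := by
      have := hσ3 ⟨j, h⟩
      simpa only [List.get_eq_getElem] using this
    by_contra hlt
    push_neg at hlt
    rcases Nat.lt_or_ge ((σ ⟨j, h⟩ : Fin m.length) : ℕ) j with hkj' | hkj'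
    · exact (hNoRev _ j hkj' (by omega) (by omega) hkm h).2 hrevjk
    · have hkj2 : j < ((σ ⟨j, h⟩ : Fin m.length) : ℕ) := by omega
      exact (hNoRev j _ hkj2 (by omega) (by omega) h hkm).1 hrevjk
  -- in fact it moves it up by exactly n
  have hσexact : ∀ (j : ℕ) (h : j < m.length), j < n →
      ((σ ⟨j, h⟩ : Fin m.length) : ℕ) = j + n := by
    have key : ∀ d (j : ℕ) (h : j < m.length), j < n → n - j ≤ d + 1 →
        ((σ ⟨j, h⟩ : Fin m.length) : ℕ) = j + n := by
      intro d
      induction d with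
      | zero =>
        intro j h hj hd
        have h1 := hσlow j h hj
        have hkm : ((σ ⟨j, h⟩ : Fin m.length) : ℕ) < m.length := (σ ⟨j, h⟩).isLt
        omega
      | succ d ih =>
        intro j h hj hd
        have h1 := hσlow j h hj
        have hkm : ((σ ⟨j, h⟩ : Fin m.length) : ℕ) < m.length := (σ ⟨j, h⟩).isLt
        by_contra hne2
        have hk2 : j + n < ((σ ⟨j, h⟩ : Fin m.length) : ℕ) := by omega
        have hj'lt : ((σ ⟨j, h⟩ : Fin m.length) : ℕ) - n < n := by omega
        have hj'm : ((σ ⟨j, h⟩ : Fin m.length) : ℕ) - n < m.length := by omega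
        have hih := ih (((σ ⟨j, h⟩ : Fin m.length) : ℕ) - n) hj'm hj'lt (by omega)
        have heq : σ ⟨((σ ⟨j, h⟩ : Fin m.length) : ℕ) - n, hj'm⟩ = σ ⟨j, h⟩ := by
          apply Fin.ext
          rw [hih]
          omega
        have := σ.injective heq
        have hvv : ((σ ⟨j, h⟩ : Fin m.length) : ℕ) - n = j := congrArg Fin.val this
        omega
    intro j h hj
    exact key n j h hj (by omega)
  -- opposite tokens are mutual reverses
  have hopp : ∀ (i : ℕ) (h1 : i < m.length) (h2 : i + n < m.length), i < n →
      IsReverse m[i] m[i + n] ∧ IsReverse m[i + n] m[i] := by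
    intro i h1 h2 hin
    have hσi : σ ⟨i, h1⟩ = ⟨i + n, h2⟩ := Fin.ext (hσexact i h1 hin)
    constructor
    · have := hσ3 ⟨i, h1⟩
      rw [hσi] at this
      simpa only [List.get_eq_getElem] using this
    · have := hσ3 (σ ⟨i, h1⟩)
      rw [hσ2 ⟨i, h1⟩, hσi] at this
      simpa only [List.get_eq_getElem] using this
  refine ⟨?_, ?_⟩
  · -- rotations are orderly returns
    intro i hi
    have him : i < m.length := by omega
    set mm := m ++ m with hmm
    clear_value mm
    have hmml : mm.length = 2 * m.length := by rw [hmm, List.length_append]; omega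
    set Q : ℕ → S := fun j => mApply (mm.take j) P with hQdef
    clear_value Q
    set win : ℕ → List (S → S) := fun j => (mm.drop j).take n with hwindef
    clear_value win
    have hsemm : StepwiseEff mm P := by
      rw [hmm, stepwise_append, happm]
      exact ⟨hsem, hsem⟩
    have hmmtake : ∀ j, j ≤ m.length → mm.take j = m.take j := by
      intro j hj
      rw [hmm, List.take_append_of_le_length hj]
    have hQm : ∀ j, j ≤ m.length → Q j = mApply (m.take j) P := by
      intro j hj
      simp only [hQdef]
      rw [hmmtake j hj]
    have hQper : ∀ j, j ≤ m.length → Q (m.length + j) = Q j := by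
      intro j hj
      simp only [hQdef]
      rw [hmm, List.take_append, List.take_of_length_le (by omega),
        Nat.add_sub_cancel_left, mApply_append, happm,
        List.take_append_of_le_length hj]
    have hwinlen : ∀ j, j + n ≤ mm.length → (win j).length = n := by
      intro j hj
      simp only [hwindef, List.length_take, List.length_drop]
      omega
    have hwinapply : ∀ j, mApply (win j) (Q j) = Q (j + n) := by
      intro j
      simp only [hQdef, hwindef]
      rw [List.take_add, mApply_append]
    have hwinse : ∀ j, StepwiseEff (win j) (Q j) := by
      intro j
      simp only [hQdef, hwindef]
      have h1 : StepwiseEff (mm.take j ++ mm.drop j) P := by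
        rw [List.take_append_drop]; exact hsemm
      rw [stepwise_append] at h1
      have h2 := h1.2
      rw [← List.take_append_drop n (mm.drop j), stepwise_append] at h2
      exact h2.1
    have hwinget : ∀ j t, t < n → ∀ (hb : t < (win j).length) (hb2 : j + t < mm.length),
        (win j)[t] = mm[j + t] := by
      intro j t ht hb hb2
      simp only [hwindef] at hb ⊢
      rw [List.getElem_take, List.getElem_drop]
    have hmmget1 : ∀ (k : ℕ) (h : k < mm.length), ∀ (h2 : k < m.length), mm[k] = m[k] := by
      intro k h h2
      simp only [hmm]
      exact List.getElem_append_left h2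
    have hmmget2 : ∀ (k : ℕ) (h : k < mm.length), m.length ≤ k →
        ∀ (h3 : k - m.length < m.length), mm[k] = m[k - m.length] := by
      intro k h h2 h3
      simp only [hmm]
      exact List.getElem_append_right h2
    have hrevmm : ∀ (k : ℕ) (h1 : k < mm.length) (h2 : k + n < mm.length),
        rev mm[k] = mm[k + n] := by
      intro k h1 h2
      rcases Nat.lt_or_ge k n with hk | hk
      · rw [hmmget1 k h1 (by omega), hmmget1 (k + n) h2 (by omega)]
        exact rev_spec (hopp k (by omega) (by omega) hk).1
      rcases Nat.lt_or_ge k m.length with hk2 | hk2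
      · rw [hmmget1 k h1 hk2, hmmget2 (k + n) h2 (by omega) (by omega)]
        have e1 : k - n + n = k := by omega
        have e2 : k + n - m.length = k - n := by omega
        simp only [e2]
        have h3 := rev_spec (hopp (k - n) (by omega) (by omega) (by omega)).2
        simpa only [e1] using h3
      · rw [hmmget2 k h1 hk2 (by omega), hmmget2 (k + n) h2 (by omega) (by omega)]
        have e2 : k + n - m.length = k - m.length + n := by omega
        simp only [e2]
        exact rev_spec (hopp (k - m.length) (by omega) (by omega) (by omega)).1
    have hwin_low : ∀ j, j ≤ n → win j = (m.drop j).take n := by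
      intro j hj
      simp only [hwindef, hmm]
      rw [List.drop_append_of_le_length (by omega),
        List.take_append_of_le_length (by simp only [List.length_drop]; omega)]
    have hwin_high : ∀ j, m.length ≤ j → j ≤ m.length + n → win j = win (j - m.length) := by
      intro j hj hj2
      simp only [hwindef, hmm]
      rw [List.drop_append, List.drop_eq_nil_of_le hj, List.nil_append,
        List.drop_append,
        List.take_append_of_le_length (by simp only [List.length_drop]; omega)]
    have hwinC_low : ∀ j, j < n → Concise T (win j) (Q j) := by
      intro j hj
      rw [hwin_low j (le_of_lt hj), hQm j (by omega)]
      exact hreg j hj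
    have hwinC : ∀ j, j < m.length → Concise T (win j) (Q j) := by
      intro j hj
      rcases Nat.lt_or_ge j n with hjn | hjn
      · exact hwinC_low j hjn
      · have hjn' : j - n < n := by omega
        have hw := hwinC_low (j - n) hjn'
        have happly : mApply (win (j - n)) (Q (j - n)) = Q j := by
          rw [hwinapply (j - n)]
          congr 1
          omega
        have hC := revMsg_concise hM hw
        rw [happly] at hC
        have hrel : win j = (win (j - n)).map rev := by
          refine List.ext_getElem ?_ ?_
          · rw [List.length_map, hwinlen j (by omega), hwinlen (j - n) (by omega)]
          · intro t h1 h2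
            have ht : t < n := by
              rw [hwinlen j (by omega)] at h1; exact h1
            rw [List.getElem_map,
              hwinget j t ht h1 (by omega),
              hwinget (j - n) t ht (by rw [List.length_map] at h2; exact h2) (by omega),
              hrevmm (j - n + t) (by omega) (by omega)]
            congr 1
            omega
        have hrevwin : revMsg (win (j - n)) = (win j).reverse := by
          rw [revMsg, hrel]
        obtain ⟨⟨hA, hB, hCse, hD⟩, -⟩ := hC
        rw [hrevwin] at hA hB hD
        refine ⟨?_, ?_, hwinse j, ?_⟩
        · intro x hx; exact hA x (List.mem_reverse.mpr hx)
        · intro x hx y hy; exact hB x (List.mem_reverse.mpr hx) y (List.mem_reverse.mpr hy)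
        · exact List.nodup_reverse.mp hD
    have hQne : ∀ j, j < m.length → Q (j + n) ≠ Q j := by
      intro j hj heq
      refine concise_no_return hM (hwinC j hj) ?_ ?_
      · intro hnil
        have := hwinlen j (by omega)
        rw [hnil] at this
        simp at this
        omega
      · rw [hwinapply j, heq]
    rw [← hQm i (le_of_lt him)]
    set M := m.drop i ++ m.take i with hMdef
    clear_value M
    have hMlen : M.length = m.length := by
      rw [hMdef, List.length_append, List.length_drop, List.length_take]
      omega
    have hMdecomp : mm.drop i = M ++ m.drop i := by
      rw [hmm, List.drop_append_of_le_length (le_of_lt him), hMdef]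
      conv_rhs => rw [List.append_assoc, List.take_append_drop]
    have hMtake : M.take n = win i := by
      have : win i = M.take n := by
        simp only [hwindef]
        rw [hMdecomp, List.take_append_of_le_length (by omega)]
      exact this.symm
    have hMdrop : M.drop n = win (i + n) := by
      have : win (i + n) = M.drop n := by
        simp only [hwindef]
        rw [← List.drop_drop, hMdecomp, List.drop_append_of_le_length (by omega),
          List.take_append_of_le_length (by simp only [List.length_drop]; omega),
          List.take_of_length_le (by simp only [List.length_drop]; omega)]
      exact this.symm
    obtain ⟨i', hi'lt, hwin_eq, hQ1, hQ2⟩ :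
        ∃ i', i' < m.length ∧ win (i + n) = win i' ∧ Q (i' + n) = Q i ∧ Q (i + n) = Q i' := by
      rcases Nat.lt_or_ge i n with hc | hc
      · refine ⟨i + n, by omega, rfl, ?_, rfl⟩
        have h := hQper i (le_of_lt him)
        rw [← h]
        congr 1
        omega
      · refine ⟨i - n, by omega, ?_, ?_, ?_⟩
        · have h := hwin_high (i + n) (by omega) (by omega)
          rw [h]
          congr 1
          omega
        · congr 1
          omega
        · have h := hQper (i - n) (by omega)
          rw [← h]
          congr 1
          omega
    have hwi' := hwinC i' hi'lt
    have happ' : mApply (win i') (Q i') = Q i := by rw [hwinapply i', hQ1]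
    have hC2 := revMsg_concise hM hwi'
    rw [happ'] at hC2
    refine ⟨M.take n, revMsg (win i'), M.drop n, ?_, hC2.1, ?_, ?_, ?_,
      (List.take_append_drop n M).symm⟩
    · rw [hMtake]; exact hwinC i him
    · rw [hMtake, hwinapply i, hQ2, hC2.2]
    · rw [hMtake, hwinapply i]
      exact hQne i him
    · rw [hMdrop, hwin_eq]
      exact isReverseOfMsg_revMsg' hM hwi'.1
  · intro i hi
    have h1 : i < m.length := by omega
    have h2 : i + n < m.length := by omega
    have := hopp i h1 h2 hi
    simpa only [List.get_eq_getElem] using this
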